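/- Let E be an open convex subset of ℝᵖ and let F_1, F_2, … be a sequence of random concave functions on E (i.e., for each n and each sample point ω, the map x ↦ F_n(ω, x) is concave on E) such that F_n(x) converges in probability to f(x) as n → ∞ for every x ∈ E, where f is a real-valued function on E. Suppose f has a unique maximum at a point x̂ ∈ E, and let X̂_n be random points of E maximizing F_n (i.e., F_n(ω, X̂_n(ω)) = sup_{x∈E} F_n(ω, x) for each ω). Then F_n(X̂_n) converges in probability to f(x̂) as n → ∞. -/

import Mathlib

open MeasureTheory Filter Metric Set Topology

set_option maxHeartbeats 1000000 in
/-- Andersen–Gill, convergence of attained maxima: let `F_n` be random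
concave functions on an open convex `E ⊆ ℝᵖ` with `F_n(x) → f(x)` in probability for every
`x ∈ E`, let `f` have a unique maximum at `x̂ ∈ E`, and let `X̂_n` be random points of `E`
maximizing `F_n`. Then `F_n(X̂_n) → f(x̂)` in probability. -/
theorem attained_max_of_concave_tendsto_in_measure {Ω : Type*} [MeasurableSpace Ω]
    (μ : Measure Ω) [IsProbabilityMeasure μ] {p : ℕ}
    (E : Set (Fin p → ℝ)) (hEopen : IsOpen E) (hEconv : Convex ℝ E)
    (F : ℕ → Ω → (Fin p → ℝ) → ℝ)
    (hconc : ∀ n ω, ConcaveOn ℝ E (F n ω))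
    (f : (Fin p → ℝ) → ℝ)
    (hptwise : ∀ x ∈ E,
      TendstoInMeasure μ (fun n ω => F n ω x) atTop (fun _ => f x))
    (xhat : Fin p → ℝ) (hxhatmem : xhat ∈ E)
    (hmax : ∀ x ∈ E, f x ≤ f xhat)
    (huniq : ∀ x ∈ E, f x = f xhat → x = xhat)
    (Xhat : ℕ → Ω → Fin p → ℝ)
    (hXhat : ∀ n ω, Xhat n ω ∈ E ∧ ∀ x ∈ E, F n ω x ≤ F n ω (Xhat n ω)) :
    TendstoInMeasure μ (fun n ω => F n ω (Xhat n ω)) atTop (fun _ => f xhat) := by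
  -- trivial case : `p = 0`
  rcases Nat.eq_zero_or_pos p with hp | hp
  · subst hp
    have hXx : ∀ n ω, Xhat n ω = xhat := fun n ω => Subsingleton.elim _ _
    have : (fun n ω => F n ω (Xhat n ω)) = fun n ω => F n ω xhat := by
      funext n ω; rw [hXx]
    rw [this]
    exact hptwise xhat hxhatmem
  -- `f` is concave on `E`
  have hconcf : ConcaveOn ℝ E f := by
    refine ⟨hEconv, fun x hx y hy a c ha hc hac => ?_⟩
    set z := a • x + c • y with hz
    have hzE : z ∈ E := hEconv hx hy ha hc hac
    obtain ⟨n1, hn1, hae1⟩ := (hptwise x hx).exists_seq_tendsto_ae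
    have h2 : TendstoInMeasure μ (fun i ω => F (n1 i) ω y) atTop (fun _ => f y) :=
      fun ε hε => (hptwise y hy ε hε).comp hn1.tendsto_atTop
    obtain ⟨n2, hn2, hae2⟩ := h2.exists_seq_tendsto_ae
    have h3 : TendstoInMeasure μ (fun i ω => F (n1 (n2 i)) ω z) atTop (fun _ => f z) :=
      fun ε hε => (hptwise z hzE ε hε).comp (hn1.comp hn2).tendsto_atTop
    obtain ⟨n3, hn3, hae3⟩ := h3.exists_seq_tendsto_ae
    have hne : (ae μ).NeBot := ae_neBot.2 (IsProbabilityMeasure.ne_zero μ)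
    obtain ⟨ω, h1, h2', h3'⟩ := (hae1.and (hae2.and hae3)).exists
    have l1 : Tendsto (fun i => F (n1 (n2 (n3 i))) ω x) atTop (𝓝 (f x)) :=
      h1.comp (hn2.comp hn3).tendsto_atTop
    have l2 : Tendsto (fun i => F (n1 (n2 (n3 i))) ω y) atTop (𝓝 (f y)) :=
      h2'.comp hn3.tendsto_atTop
    have l3 : Tendsto (fun i => F (n1 (n2 (n3 i))) ω z) atTop (𝓝 (f z)) := h3'
    refine le_of_tendsto_of_tendsto' ((l1.const_smul a).add (l2.const_smul c)) l3
      (fun i => (hconc _ ω).2 hx hy ha hc hac)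
  have hcontf : ContinuousOn f E := hconcf.continuousOn hEopen
  rw [tendstoInMeasure_iff_dist]
  intro ε hε
  -- choose a radius `r` with the closed ball inside `E`
  obtain ⟨r, hr, hball⟩ : ∃ r, 0 < r ∧ closedBall xhat r ⊆ E := by
    obtain ⟨r0, hr0, hr0sub⟩ := Metric.isOpen_iff.1 hEopen xhat hxhatmem
    exact ⟨r0/2, by positivity, fun x hx =>
      hr0sub (lt_of_le_of_lt (mem_closedBall.1 hx) (by linarith))⟩
  -- continuity of `f` at `xhat`
  have hfc : ContinuousAt f xhat := hcontf.continuousAt (hEopen.mem_nhds hxhatmem)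
  obtain ⟨δ₀, hδ₀pos, hδ₀⟩ := Metric.continuousAt_iff.1 hfc (ε/4) (by positivity)
  obtain ⟨δ, hδpos, h2δr, h2δδ₀⟩ : ∃ δ, 0 < δ ∧ 2*δ ≤ r ∧ 2*δ < δ₀ := by
    refine ⟨min (r/2) (δ₀/4), lt_min (by positivity) (by positivity), ?_, ?_⟩
    · have := min_le_left (r/2) (δ₀/4); linarith
    · have := min_le_right (r/2) (δ₀/4); linarith
  have hBall2E : closedBall xhat (2*δ) ⊆ E := fun x hx =>
    hball (closedBall_subset_closedBall h2δr hx)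
  have hδr : δ ≤ r := by linarith
  have hSE : sphere xhat δ ⊆ E := fun x hx =>
    hball (sphere_subset_closedBall.trans (closedBall_subset_closedBall hδr) hx)
  -- `f` is within `ε/4` of its maximum on the ball of radius `2δ`
  have hfnear : ∀ z ∈ closedBall xhat (2*δ), f xhat - ε/4 ≤ f z := by
    intro z hz
    have h1 : dist z xhat < δ₀ := lt_of_le_of_lt (mem_closedBall.1 hz) h2δδ₀
    have h2 := hδ₀ h1
    rw [Real.dist_eq] at h2
    linarith [(abs_lt.1 h2).1]
  -- maximum of `f` on the sphere of radius `δ`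
  haveI : Nonempty (Fin p) := ⟨⟨0, hp⟩⟩
  have hSne : (sphere xhat δ).Nonempty := NormedSpace.sphere_nonempty.2 hδpos.le
  obtain ⟨v₀, hv₀S, hv₀max⟩ :=
    (isCompact_sphere xhat δ).exists_isMaxOn hSne (hcontf.mono hSE)
  obtain ⟨g, hgpos, hgdef⟩ : ∃ g, 0 < g ∧ f v₀ = f xhat - g := by
    refine ⟨f xhat - f v₀, ?_, by ring⟩
    have hv₀E : v₀ ∈ E := hSE hv₀S
    have h1 : f v₀ ≤ f xhat := hmax v₀ hv₀E
    rcases eq_or_lt_of_le h1 with heq | hlt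
    · exfalso
      have hEq := huniq v₀ hv₀E heq
      have hd : dist v₀ xhat = δ := mem_sphere.1 hv₀S
      rw [hEq] at hd
      simp at hd
      linarith
    · linarith
  -- the tolerance `η`
  obtain ⟨η, hηpos, hηε, hηg, hη1⟩ :
      ∃ η, 0 < η ∧ η ≤ ε/8 ∧ η ≤ g/8 ∧ η ≤ 1 := by
    refine ⟨min (ε/8) (min (g/8) 1), lt_min (by positivity)
      (lt_min (by positivity) one_pos), min_le_left _ _,
      le_trans (min_le_right _ _) (min_le_left _ _),
      le_trans (min_le_right _ _) (min_le_right _ _)⟩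
  -- the extrapolation parameter `κ`
  obtain ⟨κ, hκpos, hκ1, hκA⟩ :
      ∃ κ, 0 < κ ∧ κ ≤ 1 ∧ κ * (f v₀ - f xhat + ε/4 + 2*η) ≤ g/4 := by
    set A : ℝ := max (f v₀ - f xhat + ε/4 + 2) 1 with hAdef
    have hA1 : (1:ℝ) ≤ A := le_max_right _ _
    have hApos : 0 < A := lt_of_lt_of_le one_pos hA1
    refine ⟨min 1 (g/(4*A)), lt_min one_pos (by positivity), min_le_left _ _, ?_⟩
    have h1 : f v₀ - f xhat + ε/4 + 2*η ≤ A := le_trans (by linarith) (le_max_left _ _)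
    have h2 : min 1 (g/(4*A)) * (f v₀ - f xhat + ε/4 + 2*η) ≤ min 1 (g/(4*A)) * A :=
      mul_le_mul_of_nonneg_left h1 (lt_min one_pos (by positivity)).le
    have h3 : min 1 (g/(4*A)) * A ≤ (g/(4*A)) * A :=
      mul_le_mul_of_nonneg_right (min_le_right _ _) hApos.le
    have h4 : (g/(4*A)) * A = g/4 := by field_simp
    linarith
  -- a finite `κ*δ`-net `Y` of the sphere
  have hγpos : 0 < κ * δ := mul_pos hκpos hδpos
  obtain ⟨Y, hYS, hYfin, hYcov⟩ :=
    (isCompact_sphere xhat δ).elim_finite_subcover_image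
      (b := sphere xhat δ) (c := fun y => ball y (κ * δ))
      (fun y _ => isOpen_ball) (fun u hu => mem_biUnion hu (mem_ball_self hγpos))
  -- the vertex set `V` of the cube of half-width `2δ`
  set V : Set (Fin p → ℝ) := Set.pi Set.univ (fun i => {xhat i - 2*δ, xhat i + 2*δ})
    with hVdef
  have hVfin : V.Finite :=
    Set.Finite.pi (fun i => (Set.finite_singleton _).insert _)
  have hHullV : convexHull ℝ V = closedBall xhat (2*δ) := by
    rw [hVdef, convexHull_pi, closedBall_pi xhat (by positivity)]
    exact Set.pi_congr rfl fun i _ => by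
      rw [convexHull_pair, segment_eq_Icc (by linarith), Real.closedBall_eq_Icc]
  have hVball : V ⊆ closedBall xhat (2*δ) := hHullV ▸ subset_convexHull ℝ V
  have hVE : V ⊆ E := fun z hz => hBall2E (hVball hz)
  -- the finite control set `Z`
  have hZfin : (insert xhat (V ∪ Y)).Finite := Set.Finite.insert _ (hVfin.union hYfin)
  set ZF : Finset (Fin p → ℝ) := hZfin.toFinset with hZFdef
  have hxhatZ : xhat ∈ ZF := by
    rw [hZFdef, Set.Finite.mem_toFinset]; exact mem_insert _ _
  have hVZ : ∀ z ∈ V, z ∈ ZF := fun z hz => by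
    rw [hZFdef, Set.Finite.mem_toFinset]; exact Set.mem_insert_of_mem _ (Or.inl hz)
  have hYZ : ∀ y ∈ Y, y ∈ ZF := fun y hy => by
    rw [hZFdef, Set.Finite.mem_toFinset]; exact Set.mem_insert_of_mem _ (Or.inr hy)
  have hZE : ∀ z ∈ ZF, z ∈ E := by
    intro z hz
    rw [hZFdef, Set.Finite.mem_toFinset] at hz
    rcases hz with rfl | hz
    · exact hxhatmem
    · rcases hz with hz | hz
      · exact hVE hz
      · exact hSE (hYS hz)
  -- THE DETERMINISTIC KEY ESTIMATE
  have key : ∀ n ω, (∀ z ∈ ZF, dist (F n ω z) (f z) < η) →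
      dist (F n ω (Xhat n ω)) (f xhat) < ε := by
    intro n ω hgood
    have hGconc : ConcaveOn ℝ E (F n ω) := hconc n ω
    have hGxhat : |F n ω xhat - f xhat| < η := by
      have := hgood xhat hxhatZ; rwa [Real.dist_eq] at this
    -- lower bound on `F n ω` on the ball of radius `2δ`
    have hGlow : ∀ w ∈ closedBall xhat (2*δ), f xhat - ε/4 - η ≤ F n ω w := by
      intro w hw
      obtain ⟨z, hzV, hzle⟩ := hGconc.exists_le_of_mem_convexHull hVE (hHullV ▸ hw)
      have h1 : |F n ω z - f z| < η := by
        have := hgood z (hVZ z hzV); rwa [Real.dist_eq] at this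
      have h2 : f xhat - ε/4 ≤ f z := hfnear z (hVball hzV)
      linarith [(abs_lt.1 h1).1]
    -- upper bound on `F n ω` on the sphere of radius `δ`
    have hGsphere : ∀ u ∈ sphere xhat δ, F n ω u ≤ f xhat - 5/8 * g := by
      intro u hu
      obtain ⟨y, hyY, hyu⟩ := Set.mem_iUnion₂.1 (hYcov hu)
      have hvball : y + κ⁻¹ • (y - u) ∈ closedBall xhat (2*δ) := by
        have hvy : dist (y + κ⁻¹ • (y - u)) y ≤ δ := by
          have he : y + κ⁻¹ • (y - u) - y = κ⁻¹ • (y - u) := by abel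
          rw [dist_eq_norm, he, norm_smul, Real.norm_eq_abs,
            abs_of_pos (inv_pos.2 hκpos)]
          have h1 : ‖y - u‖ ≤ κ * δ := by
            rw [← dist_eq_norm, dist_comm]
            exact (mem_ball.1 hyu).le
          calc κ⁻¹ * ‖y - u‖ ≤ κ⁻¹ * (κ * δ) :=
                mul_le_mul_of_nonneg_left h1 (inv_pos.2 hκpos).le
            _ = δ := inv_mul_cancel_left₀ hκpos.ne' δ
        have hyx : dist y xhat = δ := mem_sphere.1 (hYS hyY)
        have htri := dist_triangle (y + κ⁻¹ • (y - u)) y xhat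
        rw [mem_closedBall]
        linarith
      have hvE : y + κ⁻¹ • (y - u) ∈ E := hBall2E hvball
      have huE : u ∈ E := hSE hu
      have hcomb : (1/(1+κ)) • u + (κ/(1+κ)) • (y + κ⁻¹ • (y - u)) = y := by
        have hκne : κ ≠ 0 := hκpos.ne'
        have h1κ : (1:ℝ) + κ ≠ 0 := by positivity
        match_scalars <;> first
        | (field_simp; ring)
        | field_simp
      have hconcineq := hGconc.2 huE hvE (by positivity : (0:ℝ) ≤ 1/(1+κ))
        (by positivity : (0:ℝ) ≤ κ/(1+κ))
        (by rw [← add_div, div_self (by positivity : (1:ℝ)+κ ≠ 0)])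
      rw [hcomb] at hconcineq
      simp only [smul_eq_mul] at hconcineq
      have hGy : F n ω y ≤ f y + η := by
        have := hgood y (hYZ y hyY); rw [Real.dist_eq] at this
        linarith [(abs_lt.1 this).2]
      have hfy : f y ≤ f v₀ := hv₀max (hYS hyY)
      have hGv : f xhat - ε/4 - η ≤ F n ω (y + κ⁻¹ • (y - u)) := hGlow _ hvball
      have h1κpos : (0:ℝ) < 1 + κ := by positivity
      have hGu : F n ω u ≤ (1+κ) * F n ω y - κ * F n ω (y + κ⁻¹ • (y - u)) := by
        have h' := mul_le_mul_of_nonneg_left hconcineq h1κpos.le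
        have lhs : (1+κ) * ((1/(1+κ)) * F n ω u
            + (κ/(1+κ)) * F n ω (y + κ⁻¹ • (y - u)))
            = F n ω u + κ * F n ω (y + κ⁻¹ • (y - u)) := by
          field_simp
        rw [lhs] at h'
        linarith
      have hGyv₀ : F n ω y ≤ f v₀ + η := by linarith
      have e1 : (1+κ) * F n ω y ≤ (1+κ) * (f v₀ + η) :=
        mul_le_mul_of_nonneg_left hGyv₀ h1κpos.le
      have e2 : κ * (f xhat - ε/4 - η) ≤ κ * F n ω (y + κ⁻¹ • (y - u)) :=
        mul_le_mul_of_nonneg_left hGv hκpos.le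
      have e3 : (1+κ) * (f v₀ + η) - κ * (f xhat - ε/4 - η)
          = (f v₀ + η) + κ * (f v₀ - f xhat + ε/4 + 2*η) := by ring
      have e4 : f v₀ + η + κ * (f v₀ - f xhat + ε/4 + 2*η)
          ≤ (f xhat - g + η) + g/4 := by rw [hgdef] at hκA ⊢; linarith
      linarith
    -- now bound the attained maximum
    obtain ⟨hXE, hXmax⟩ := hXhat n ω
    have hGxl : f xhat - η ≤ F n ω xhat := by linarith [(abs_lt.1 hGxhat).1]
    have hGxu : F n ω xhat ≤ f xhat + η := by linarith [(abs_lt.1 hGxhat).2]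
    have hlow : f xhat - η ≤ F n ω (Xhat n ω) :=
      le_trans hGxl (hXmax xhat hxhatmem)
    have hupp : F n ω (Xhat n ω) ≤ f xhat + ε/4 + 3*η := by
      rcases le_or_gt (dist (Xhat n ω) xhat) δ with hclose | hfar
      · -- reflection through `xhat`
        have hvball : xhat + (xhat - Xhat n ω) ∈ closedBall xhat (2*δ) := by
          rw [mem_closedBall, dist_eq_norm]
          have he : xhat + (xhat - Xhat n ω) - xhat = xhat - Xhat n ω := by abel
          rw [he, ← dist_eq_norm, dist_comm]
          linarith
        have hvE : xhat + (xhat - Xhat n ω) ∈ E := hBall2E hvball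
        have hcomb : (1/2 : ℝ) • (Xhat n ω) + (1/2 : ℝ) • (xhat + (xhat - Xhat n ω))
            = xhat := by
          match_scalars <;> norm_num
        have h := hGconc.2 hXE hvE (by norm_num : (0:ℝ) ≤ 1/2)
          (by norm_num : (0:ℝ) ≤ 1/2) (by norm_num)
        rw [hcomb] at h
        simp only [smul_eq_mul] at h
        have hGv : f xhat - ε/4 - η ≤ F n ω (xhat + (xhat - Xhat n ω)) :=
          hGlow _ hvball
        linarith
      · -- go to the sphere along the segment
        have hρpos : 0 < dist (Xhat n ω) xhat := lt_trans hδpos hfar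
        obtain ⟨t, htpos, ht1, htρ⟩ :
            ∃ t, 0 < t ∧ t ≤ 1 ∧ t * dist (Xhat n ω) xhat = δ := by
          refine ⟨δ / dist (Xhat n ω) xhat, by positivity, ?_,
            div_mul_cancel₀ _ hρpos.ne'⟩
          rw [div_le_one hρpos]; exact hfar.le
        have huS : xhat + t • (Xhat n ω - xhat) ∈ sphere xhat δ := by
          rw [mem_sphere, dist_eq_norm]
          have he : xhat + t • (Xhat n ω - xhat) - xhat = t • (Xhat n ω - xhat) := by
            abel
          rw [he, norm_smul, Real.norm_eq_abs, abs_of_pos htpos,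
            ← dist_eq_norm]
          rw [dist_comm] at htρ
          rw [dist_comm]
          exact htρ
        have hcomb : t • (Xhat n ω) + (1 - t) • xhat
            = xhat + t • (Xhat n ω - xhat) := by
          rw [sub_smul, one_smul, smul_sub]; abel
        have h := hGconc.2 hXE hxhatmem htpos.le (by linarith : (0:ℝ) ≤ 1 - t)
          (by ring)
        rw [hcomb] at h
        simp only [smul_eq_mul] at h
        have hGu : F n ω (xhat + t • (Xhat n ω - xhat)) ≤ f xhat - 5/8 * g :=
          hGsphere _ huS
        have hGxg : f xhat - g/8 ≤ F n ω xhat := by linarith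
        have hXle : F n ω (Xhat n ω) ≤ F n ω xhat := by
          have hGuGx : F n ω (xhat + t • (Xhat n ω - xhat)) ≤ F n ω xhat := by
            linarith
          have h2 : t * F n ω (Xhat n ω) ≤ t * F n ω xhat := by linarith
          exact le_of_mul_le_mul_left h2 htpos
        linarith
    rw [Real.dist_eq, abs_lt]
    constructor <;> linarith
  -- THE MEASURE ESTIMATE
  have hmain : ∀ n, μ {ω | ε ≤ dist (F n ω (Xhat n ω)) (f xhat)} ≤
      ∑ z ∈ ZF, μ {ω | η ≤ dist (F n ω z) (f z)} := by
    intro n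
    refine le_trans (measure_mono ?_) (measure_biUnion_finset_le _ _)
    intro ω hω
    rw [Set.mem_setOf_eq] at hω
    by_contra hc
    simp only [Set.mem_iUnion, Set.mem_setOf_eq, not_exists, not_le] at hc
    have hd : ∀ z ∈ ZF, dist (F n ω z) (f z) < η := fun z hz => hc z hz
    linarith [key n ω hd]
  have hsum : Tendsto (fun n => ∑ z ∈ ZF, μ {ω | η ≤ dist (F n ω z) (f z)})
      atTop (𝓝 0) := by
    have h0 : (0 : ENNReal) = ∑ z ∈ ZF, 0 := by simp
    rw [h0]
    exact tendsto_finset_sum _ (fun z hz => tendstoInMeasure_iff_dist.1 (hptwise z (hZE z hz)) η hηpos)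
  exact tendsto_of_tendsto_of_tendsto_of_le_of_le tendsto_const_nhds hsum
    (fun n => zero_le) hmain
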